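/- For any group 1/r(1,a), the ℂ-algebra homomorphism φ : ℂ[𝗓] → ℛ maps onto the invariant ring ℛ^G (i.e. the image of φ equals ℛ^G), and QDet(𝗓) is contained in the kernel of φ; in particular φ(q_{i,j}) = 0 for every quasiminor q_{i,j}. -/

import Mathlib

open MvPolynomial
open Fin.NatCast

/-- Hirzebruch–Jung continued fraction `[γ_1,…,γ_s] = γ_1 − 1/(γ_2 − 1/(⋯ − 1/γ_s))`
(with the Mathlib convention `1/0 = 0`, so that `hjcf [γ] = γ`). -/
def hjcf : List ℚ → ℚ
  | [] => 0
  | g :: rest => g - 1 / hjcf rest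

/-- Arrows of the quiver of the reconstruction algebra of type `A`:
`Sum.inl v` is the clockwise arrow `c_{v,v-1} : v → v−1` (`c_{0,n} : 0 → n` for `v = 0`),
`Sum.inr (Sum.inl v)` is the anticlockwise arrow `a_{v,v+1} : v → v+1` (`a_{n,0}` for `v = n`),
`Sum.inr (Sum.inr h)` is the extra arrow `k_{h+1} : l_{h+1} → 0`. -/
abbrev Arrow (n ℓ : ℕ) : Type := Fin (n + 1) ⊕ (Fin (n + 1) ⊕ Fin ℓ)

/-- The clockwise arrow `c_{v,v−1}` (indices mod `n+1`). -/
def cc (n ℓ : ℕ) (v : ℕ) : Arrow n ℓ := Sum.inl (v : Fin (n + 1))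

/-- The anticlockwise arrow `a_{v,v+1}` (indices mod `n+1`). -/
def aa (n ℓ : ℕ) (v : ℕ) : Arrow n ℓ := Sum.inr (Sum.inl (v : Fin (n + 1)))

/-- The arrow `k_h`, with the conventions `k_0 = c_{1,0}` and `k_h = a_{n,0}` for `h > ℓ`
(in particular `k_{ℓ+1} = a_{n,0}`). -/
def kArr (n ℓ : ℕ) (h : ℕ) : Arrow n ℓ :=
  if hh : 1 ≤ h ∧ h ≤ ℓ then Sum.inr (Sum.inr ⟨h - 1, by omega⟩)
  else if h = 0 then cc n ℓ 1 else aa n ℓ n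

/-- Tail vertex of an arrow, where `L h` is the tail of `k_h`. -/
def tl (n ℓ : ℕ) (L : ℕ → ℕ) : Arrow n ℓ → Fin (n + 1)
  | Sum.inl v => v
  | Sum.inr (Sum.inl v) => v
  | Sum.inr (Sum.inr h) => ((L (h.val + 1) : ℕ) : Fin (n + 1))

/-- Head vertex of an arrow. -/
def hd (n ℓ : ℕ) : Arrow n ℓ → Fin (n + 1)
  | Sum.inl v => ((v.val + n : ℕ) : Fin (n + 1))
  | Sum.inr (Sum.inl v) => ((v.val + 1 : ℕ) : Fin (n + 1))
  | Sum.inr (Sum.inr _) => 0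

/-- The action of a torus element `μ ∈ G = (ℂ*)^{Q_0}` on
`ℛ = ℂ[x_q : q ∈ Q_1]`, via `μ · x_q = μ_{t q}⁻¹ μ_{h q} x_q`. -/
noncomputable def torusAct (n ℓ : ℕ) (L : ℕ → ℕ) (μ : Fin (n + 1) → ℂˣ) :
    MvPolynomial (Arrow n ℓ) ℂ →ₐ[ℂ] MvPolynomial (Arrow n ℓ) ℂ :=
  aeval fun q => C ((μ (tl n ℓ L q) : ℂ)⁻¹ * (μ (hd n ℓ q) : ℂ)) * X q

/-- The invariant subalgebra `ℛ^G`. -/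
noncomputable def invAlg (n ℓ : ℕ) (L : ℕ → ℕ) :
    Subalgebra ℂ (MvPolynomial (Arrow n ℓ) ℂ) where
  carrier := {f | ∀ μ, torusAct n ℓ L μ f = f}
  mul_mem' := fun ha hb μ => by rw [map_mul, ha μ, hb μ]
  add_mem' := fun ha hb μ => by rw [map_add, ha μ, hb μ]
  algebraMap_mem' := fun c μ => (torusAct n ℓ L μ).commutes c

/-- `x_{C_{0,j}}`: the monomial of the clockwise path from `0` to `j`
(for `j = 0` this is the full clockwise loop `C_{0,0}`). -/
noncomputable def xC0 (n ℓ : ℕ) (j : ℕ) : MvPolynomial (Arrow n ℓ) ℂ :=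
  X (cc n ℓ 0) * ∏ v ∈ Finset.Icc (j + 1) n, X (cc n ℓ v)

/-- `x_{A_{0,j}}`: the monomial of the anticlockwise path from `0` to `j` (for `j ≥ 1`). -/
noncomputable def xA0 (n ℓ : ℕ) (j : ℕ) : MvPolynomial (Arrow n ℓ) ℂ :=
  ∏ v ∈ Finset.range j, X (aa n ℓ v)

/-- The cycle monomials `z_{i,j}`: `z_{0,0} = x_{C_{0,0}}`; for `1 ≤ i ≤ e−2 = ℓ+1`:
`z_{i,0} = x_{C_{0,l_i}}·x_{k_i}`, `z_{i,s_i} = x_{A_{0,l_{i−1}}}·x_{k_{i−1}}`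
(where `s_i = l_i − l_{i−1} + 1`), and
`z_{i,j} = x_{c_{l_i−j+1,l_i−j}}·x_{a_{l_i−j,l_i−j+1}}` for `1 ≤ j ≤ l_i − l_{i−1}`;
finally `z_{e−1,0} = z_{ℓ+2,0} = x_{A_{0,0}}`. -/
noncomputable def zmon (n ℓ : ℕ) (L : ℕ → ℕ) (i j : ℕ) : MvPolynomial (Arrow n ℓ) ℂ :=
  if i = 0 then ∏ v ∈ Finset.range (n + 1), X (cc n ℓ v)
  else if i = ℓ + 2 then ∏ v ∈ Finset.range (n + 1), X (aa n ℓ v)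
  else if j = 0 then xC0 n ℓ (L i) * X (kArr n ℓ i)
  else if j = L i - L (i - 1) + 1 then xA0 n ℓ (L (i - 1)) * X (kArr n ℓ (i - 1))
  else X (cc n ℓ (L i - j + 1)) * X (aa n ℓ (L i - j))

/-- Number of `j`-indices of the variables `𝗓_{i,j}` in row `i`: one variable `𝗓_{0,0}`
for `i = 0`, one variable `𝗓_{m+1,0}` for `i = m+1`, and `s_i + 1` variables
`𝗓_{i,0},…,𝗓_{i,s_i}` for `1 ≤ i ≤ m`. -/
def nj (m : ℕ) (s : ℕ → ℕ) (i : ℕ) : ℕ := if i = 0 ∨ i = m + 1 then 1 else s i + 1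

/-- The index type of the variables of the polynomial ring `ℂ[𝗓]`. -/
abbrev ZIdx (m : ℕ) (s : ℕ → ℕ) : Type := Σ i : Fin (m + 2), Fin (nj m s i.val)

/-- The variable index `(i,j)` (with a junk value for out-of-range indices). -/
def zidx (m : ℕ) (s : ℕ → ℕ) (i j : ℕ) : ZIdx m s :=
  if h : i < m + 2 ∧ j < nj m s i then ⟨⟨i, h.1⟩, ⟨j, h.2⟩⟩
  else ⟨⟨0, by omega⟩, ⟨0, by simp [nj]⟩⟩

/-- The polynomial ring `ℂ[𝗓]`. -/
abbrev CZ (m : ℕ) (s : ℕ → ℕ) : Type := MvPolynomial (ZIdx m s) ℂ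

/-- The variable `𝗓_{i,j}`. -/
noncomputable def Zv (m : ℕ) (s : ℕ → ℕ) (i j : ℕ) : CZ m s := X (zidx m s i j)

/-- `W_t = 𝗓_{t,1}·𝗓_{t,2}⋯𝗓_{t,s_t−1}`. -/
noncomputable def Wq (m : ℕ) (s : ℕ → ℕ) (t : ℕ) : CZ m s :=
  ∏ u ∈ Finset.Icc 1 (s t - 1), Zv m s t u

/-- The quasiminor `q_{i,j} = 𝗓_{i−1,0}·𝗓_{j,s_j} − 𝗓_{i,s_i}·(∏_{t=i}^{j−1} W_t)·𝗓_{j−1,0}`. -/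
noncomputable def qm (m : ℕ) (s : ℕ → ℕ) (i j : ℕ) : CZ m s :=
  Zv m s (i - 1) 0 * Zv m s j (s j)
    - Zv m s i (s i) * (∏ t ∈ Finset.Icc i (j - 1), Wq m s t) * Zv m s (j - 1) 0

/-- The quasideterminantal ideal `QDet(𝗓)`, generated by the quasiminors `q_{i,j}`
for `1 ≤ i < j ≤ m+1`. -/
noncomputable def QDet (m : ℕ) (s : ℕ → ℕ) : Ideal (CZ m s) :=
  Ideal.span {q | ∃ i j : ℕ, 1 ≤ i ∧ i < j ∧ j ≤ m + 1 ∧ q = qm m s i j}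

/-- `s_t = β_t − 1` for `1 ≤ t ≤ m` and `s_{m+1} = 0`. -/
def sfun (m : ℕ) (β : ℕ → ℕ) (t : ℕ) : ℕ := if t ≤ m then β t - 1 else 0

/-- `E = 𝗓_{0,0}·𝗓_{2,s_2}·𝗓_{3,s_3}⋯𝗓_{m+1,s_{m+1}}`. -/
noncomputable def Emon (m : ℕ) (s : ℕ → ℕ) : CZ m s :=
  Zv m s 0 0 * ∏ t ∈ Finset.Icc 2 (m + 1), Zv m s t (s t)

/-- The `ℂ`-algebra homomorphism `φ : ℂ[𝗓] → ℛ` sending each variable `𝗓_{i,j}` to the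
corresponding cycle monomial `z_{i,j}` (with `𝗓_{m+1,0} ↦ z_{e−1,0} = z_{ℓ+2,0}`,
noting `m + 1 = ℓ + 2`). -/
noncomputable def phiMap (n ℓ m : ℕ) (L : ℕ → ℕ) (s : ℕ → ℕ) :
    CZ m s →ₐ[ℂ] MvPolynomial (Arrow n ℓ) ℂ :=
  aeval fun p : ZIdx m s => zmon n ℓ L p.1.val p.2.val

section Act
variable (n ℓ : ℕ) (L : ℕ → ℕ)

noncomputable def chi (μ : Fin (n + 1) → ℂˣ) (d : Arrow n ℓ →₀ ℕ) : ℂ :=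
  ∏ q : Arrow n ℓ, ((μ (tl n ℓ L q) : ℂ)⁻¹ * (μ (hd n ℓ q) : ℂ)) ^ d q

lemma torusAct_monomial (μ : Fin (n + 1) → ℂˣ) (d : Arrow n ℓ →₀ ℕ) (b : ℂ) :
    torusAct n ℓ L μ (monomial d b) = monomial d (chi n ℓ L μ d * b) := by
  rw [monomial_eq, monomial_eq, torusAct]
  rw [map_mul, aeval_C, Finsupp.prod_fintype _ _ (fun q => pow_zero _), map_prod]
  simp only [map_pow, aeval_X, mul_pow, Finset.prod_mul_distrib]
  have hC : (C ((∏ q : Arrow n ℓ, ((μ (tl n ℓ L q) : ℂ)⁻¹ * (μ (hd n ℓ q) : ℂ)) ^ d q) * b) :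
      MvPolynomial (Arrow n ℓ) ℂ)
      = (∏ q : Arrow n ℓ, C (((μ (tl n ℓ L q) : ℂ)⁻¹) ^ d q * ((μ (hd n ℓ q) : ℂ)) ^ d q))
        * C b := by
    rw [C_mul, map_prod]
    simp [mul_pow]
  rw [chi, hC, algebraMap_eq]
  simp only [C_mul, C_pow, mul_pow, Finset.prod_mul_distrib]
  ring

def flowIn (d : Arrow n ℓ →₀ ℕ) (v : Fin (n + 1)) : ℕ :=
  ∑ q : Arrow n ℓ, if hd n ℓ q = v then d q else 0
def flowOut (d : Arrow n ℓ →₀ ℕ) (v : Fin (n + 1)) : ℕ :=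
  ∑ q : Arrow n ℓ, if tl n ℓ L q = v then d q else 0

lemma regroup (w : Fin (n + 1) → ℂ) (f : Arrow n ℓ → Fin (n + 1)) (d : Arrow n ℓ → ℕ) :
    ∏ q : Arrow n ℓ, w (f q) ^ d q
      = ∏ v : Fin (n + 1), w v ^ (∑ q : Arrow n ℓ, if f q = v then d q else 0) := by
  have h1 : ∀ q : Arrow n ℓ, w (f q) ^ d q
      = ∏ v : Fin (n + 1), w v ^ (if f q = v then d q else 0) := by
    intro q
    rw [Finset.prod_eq_single (f q)]
    · simp
    · intro v _ hv
      rw [if_neg (fun hh => hv hh.symm), pow_zero]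
    · simp
  simp only [h1]
  rw [Finset.prod_comm]
  exact Finset.prod_congr rfl fun v _ => Finset.prod_pow_eq_pow_sum _ _ _

lemma chi_eq_prod (μ : Fin (n + 1) → ℂˣ) (d : Arrow n ℓ →₀ ℕ) :
    chi n ℓ L μ d = (∏ v, ((μ v : ℂ)⁻¹) ^ flowOut n ℓ L d v) *
      (∏ v, (μ v : ℂ) ^ flowIn n ℓ d v) := by
  rw [chi]
  simp only [mul_pow, Finset.prod_mul_distrib]
  rw [regroup n ℓ (fun v => (μ v : ℂ)⁻¹) (tl n ℓ L) d, regroup n ℓ (fun v => (μ v : ℂ)) (hd n ℓ) d]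
  rfl

lemma chi_eq_one_of_balanced (μ : Fin (n + 1) → ℂˣ) (d : Arrow n ℓ →₀ ℕ)
    (hb : ∀ v, flowIn n ℓ d v = flowOut n ℓ L d v) : chi n ℓ L μ d = 1 := by
  rw [chi_eq_prod, ← Finset.prod_mul_distrib]
  rw [Finset.prod_eq_one]
  intro v _
  rw [hb v, ← mul_pow, inv_mul_cancel₀ (Units.ne_zero (μ v)), one_pow]

lemma balanced_of_chi (d : Arrow n ℓ →₀ ℕ)
    (hc : ∀ μ, chi n ℓ L μ d = 1) : ∀ v, flowIn n ℓ d v = flowOut n ℓ L d v := by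
  intro v
  set μ : Fin (n + 1) → ℂˣ := fun u => if u = v then Units.mk0 (2:ℂ) (by norm_num) else 1 with hμ
  have := hc μ
  rw [chi_eq_prod] at this
  have hout : (∏ u, ((μ u : ℂ)⁻¹) ^ flowOut n ℓ L d u)
      = ((2:ℂ)⁻¹) ^ flowOut n ℓ L d v := by
    rw [Finset.prod_eq_single v]
    · simp [hμ]
    · intro u _ hu; simp [hμ, hu]
    · simp
  have hin : (∏ u, ((μ u : ℂ)) ^ flowIn n ℓ d u) = (2:ℂ) ^ flowIn n ℓ d v := by
    rw [Finset.prod_eq_single v]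
    · simp [hμ]
    · intro u _ hu; simp [hμ, hu]
    · simp
  rw [hout, hin, inv_pow] at this
  have h2 : (2:ℂ) ^ flowIn n ℓ d v = 2 ^ flowOut n ℓ L d v := by
    field_simp at this
    linear_combination this
  have hN : ((2:ℕ) : ℂ) ^ flowIn n ℓ d v = ((2:ℕ):ℂ) ^ flowOut n ℓ L d v := by
    push_cast; exact h2
  rw [← Nat.cast_pow, ← Nat.cast_pow, Nat.cast_inj] at hN
  exact Nat.pow_right_injective (le_refl 2) hN

end Act
section Act2
variable (n ℓ : ℕ) (L : ℕ → ℕ)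

lemma coeff_torusAct (μ : Fin (n + 1) → ℂˣ) (f : MvPolynomial (Arrow n ℓ) ℂ)
    (d : Arrow n ℓ →₀ ℕ) :
    coeff d (torusAct n ℓ L μ f) = chi n ℓ L μ d * coeff d f := by
  conv_lhs => rw [← support_sum_monomial_coeff f]
  rw [map_sum, coeff_sum]
  simp only [torusAct_monomial, coeff_monomial]
  rw [Finset.sum_ite_eq' f.support d]
  by_cases hdd : d ∈ f.support
  · rw [if_pos hdd]
  · rw [if_neg hdd, MvPolynomial.notMem_support_iff.mp hdd, mul_zero]

lemma mem_invAlg_iff (f : MvPolynomial (Arrow n ℓ) ℂ) :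
    f ∈ invAlg n ℓ L ↔
      ∀ d ∈ f.support, ∀ v, flowIn n ℓ d v = flowOut n ℓ L d v := by
  constructor
  · intro hf d hdd
    apply balanced_of_chi
    intro μ
    have h1 := congrArg (coeff d) (hf μ)
    rw [coeff_torusAct] at h1
    have h2 := MvPolynomial.mem_support_iff.mp hdd
    have h3 : (chi n ℓ L μ d - 1) * coeff d f = 0 := by
      rw [sub_mul, h1, one_mul, sub_self]
    rcases mul_eq_zero.mp h3 with h | h
    · exact sub_eq_zero.mp h
    · exact absurd h h2
  · intro hb μ
    conv_lhs => rw [← support_sum_monomial_coeff f]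
    rw [map_sum]
    conv_rhs => rw [← support_sum_monomial_coeff f]
    refine Finset.sum_congr rfl fun d hdd => ?_
    rw [torusAct_monomial, chi_eq_one_of_balanced n ℓ L μ d (hb d hdd), one_mul]

lemma prodX {A : Type*} (s : Finset A) (g : A → Arrow n ℓ) :
    (∏ v ∈ s, (X (g v) : MvPolynomial (Arrow n ℓ) ℂ))
      = monomial (∑ v ∈ s, Finsupp.single (g v) 1) 1 := by
  classical
  induction s using Finset.cons_induction with
  | empty => simp
  | cons a s ha ih =>
      rw [Finset.prod_cons, Finset.sum_cons, ih, X, monomial_mul, one_mul]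

end Act2
section Zexp
variable (n ℓ : ℕ) (L : ℕ → ℕ)

noncomputable def eC0 (j : ℕ) : Arrow n ℓ →₀ ℕ :=
  Finsupp.single (cc n ℓ 0) 1 + ∑ v ∈ Finset.Icc (j + 1) n, Finsupp.single (cc n ℓ v) 1

noncomputable def eA0 (j : ℕ) : Arrow n ℓ →₀ ℕ :=
  ∑ v ∈ Finset.range j, Finsupp.single (aa n ℓ v) 1

noncomputable def zexp (i j : ℕ) : Arrow n ℓ →₀ ℕ :=
  if i = 0 then ∑ v ∈ Finset.range (n + 1), Finsupp.single (cc n ℓ v) 1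
  else if i = ℓ + 2 then ∑ v ∈ Finset.range (n + 1), Finsupp.single (aa n ℓ v) 1
  else if j = 0 then eC0 n ℓ (L i) + Finsupp.single (kArr n ℓ i) 1
  else if j = L i - L (i - 1) + 1 then eA0 n ℓ (L (i - 1)) + Finsupp.single (kArr n ℓ (i - 1)) 1
  else Finsupp.single (cc n ℓ (L i - j + 1)) 1 + Finsupp.single (aa n ℓ (L i - j)) 1

lemma xC0_eq (j : ℕ) : xC0 n ℓ j = monomial (eC0 n ℓ j) 1 := by
  rw [xC0, prodX, eC0,
    show (X (cc n ℓ 0) : MvPolynomial (Arrow n ℓ) ℂ)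
      = monomial (Finsupp.single (cc n ℓ 0) 1) 1 from rfl, monomial_mul, one_mul]

lemma xA0_eq (j : ℕ) : xA0 n ℓ j = monomial (eA0 n ℓ j) 1 := by
  rw [xA0, prodX, eA0]

lemma zmon_eq (i j : ℕ) : zmon n ℓ L i j = monomial (zexp n ℓ L i j) 1 := by
  rw [zmon, zexp]
  split_ifs with h1 h2 h3 h4
  · rw [prodX]
  · rw [prodX]
  · rw [xC0_eq, show (X (kArr n ℓ i) : MvPolynomial (Arrow n ℓ) ℂ)
      = monomial (Finsupp.single (kArr n ℓ i) 1) 1 from rfl, monomial_mul, one_mul]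
  · rw [xA0_eq, show (X (kArr n ℓ (i - 1)) : MvPolynomial (Arrow n ℓ) ℂ)
      = monomial (Finsupp.single (kArr n ℓ (i - 1)) 1) 1 from rfl, monomial_mul, one_mul]
  · rw [show (X (cc n ℓ (L i - j + 1)) : MvPolynomial (Arrow n ℓ) ℂ)
      = monomial (Finsupp.single (cc n ℓ (L i - j + 1)) 1) 1 from rfl,
      show (X (aa n ℓ (L i - j)) : MvPolynomial (Arrow n ℓ) ℂ)
      = monomial (Finsupp.single (aa n ℓ (L i - j)) 1) 1 from rfl, monomial_mul, one_mul]

end Zexp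

section Casts
variable {n ℓ : ℕ}

lemma val_cast_le {v : ℕ} (h : v ≤ n) : (((v : ℕ) : Fin (n + 1)) : ℕ) = v :=
  Fin.val_cast_of_lt (by omega)

lemma hd_cc0 : hd n ℓ (cc n ℓ 0) = ((n : ℕ) : Fin (n + 1)) := by
  show (((((0 : ℕ) : Fin (n + 1)) : ℕ) + n : ℕ) : Fin (n + 1)) = _
  rw [val_cast_le (by omega), zero_add]

lemma hd_cc {v : ℕ} (h1 : 1 ≤ v) (h2 : v ≤ n) :
    hd n ℓ (cc n ℓ v) = ((v - 1 : ℕ) : Fin (n + 1)) := by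
  show (((((v : ℕ) : Fin (n + 1)) : ℕ) + n : ℕ) : Fin (n + 1)) = _
  rw [val_cast_le h2, show v + n = (v - 1) + (n + 1) by omega, Nat.cast_add,
    Fin.natCast_self, add_zero]

lemma hd_aa {v : ℕ} (h2 : v < n) : hd n ℓ (aa n ℓ v) = ((v + 1 : ℕ) : Fin (n + 1)) := by
  show (((((v : ℕ) : Fin (n + 1)) : ℕ) + 1 : ℕ) : Fin (n + 1)) = _
  rw [val_cast_le (by omega)]

lemma hd_aan : hd n ℓ (aa n ℓ n) = 0 := by
  show (((((n : ℕ) : Fin (n + 1)) : ℕ) + 1 : ℕ) : Fin (n + 1)) = _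
  rw [val_cast_le (by omega), Fin.natCast_self]

lemma tl_cc (L : ℕ → ℕ) (v : ℕ) : tl n ℓ L (cc n ℓ v) = ((v : ℕ) : Fin (n + 1)) := rfl

lemma tl_aa (L : ℕ → ℕ) (v : ℕ) : tl n ℓ L (aa n ℓ v) = ((v : ℕ) : Fin (n + 1)) := rfl

lemma kArr_zero : kArr n ℓ 0 = cc n ℓ 1 := by simp [kArr]

lemma kArr_mid {i : ℕ} (h1 : 1 ≤ i) (h2 : i ≤ ℓ) :
    kArr n ℓ i = Sum.inr (Sum.inr ⟨i - 1, by omega⟩) := by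
  rw [kArr, dif_pos ⟨h1, h2⟩]

lemma kArr_top {i : ℕ} (hi : ℓ < i) : kArr n ℓ i = aa n ℓ n := by
  rw [kArr, dif_neg (by omega), if_neg (by omega)]

lemma tl_kArr (L : ℕ → ℕ) (hL0 : L 0 = 1) (hLtop : L (ℓ + 1) = n) {i : ℕ} (hi : i ≤ ℓ + 1) :
    tl n ℓ L (kArr n ℓ i) = ((L i : ℕ) : Fin (n + 1)) := by
  rcases Nat.eq_zero_or_pos i with h0 | h1
  · subst h0; rw [kArr_zero, tl_cc, hL0]
  rcases Nat.lt_or_ge i (ℓ + 1) with hlt | hge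
  · rw [kArr_mid h1 (by omega)]
    show ((L ((i - 1) + 1) : ℕ) : Fin (n + 1)) = _
    rw [show i - 1 + 1 = i by omega]
  · have : i = ℓ + 1 := by omega
    subst this
    rw [kArr_top (by omega), tl_aa, hLtop]

lemma hd_kArr (hn1 : 1 ≤ n) {i : ℕ} : hd n ℓ (kArr n ℓ i) = 0 := by
  rcases Nat.eq_zero_or_pos i with h0 | h1
  · subst h0; rw [kArr_zero, hd_cc le_rfl hn1]; rfl
  rcases Nat.lt_or_ge ℓ i with hlt | hge
  · rw [kArr_top hlt, hd_aan]
  · rw [kArr_mid h1 hge]; rfl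

end Casts
section Scal
variable {n ℓ : ℕ} (L : ℕ → ℕ) (μ : Fin (n + 1) → ℂˣ)

/-- scalar weight of an arrow -/
noncomputable def wfa (L : ℕ → ℕ) (μ : Fin (n + 1) → ℂˣ) (q : Arrow n ℓ) : ℂ :=
  (μ (tl n ℓ L q) : ℂ)⁻¹ * (μ (hd n ℓ q) : ℂ)

lemma act_X (q : Arrow n ℓ) : torusAct n ℓ L μ (X q) = C (wfa L μ q) * X q := by
  rw [torusAct, aeval_X, wfa]

lemma act_prodX {A : Type*} (s : Finset A) (g : A → Arrow n ℓ) :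
    torusAct n ℓ L μ (∏ v ∈ s, X (g v))
      = C (∏ v ∈ s, wfa L μ (g v)) * ∏ v ∈ s, X (g v) := by
  rw [map_prod, map_prod]
  simp only [act_X]
  rw [Finset.prod_mul_distrib]

lemma unit_cancel (x y : ℂˣ) : ((x : ℂ)⁻¹ * y) * ((y : ℂ)⁻¹ * x) = 1 := by
  field_simp

lemma cancel3 (a b c : ℂˣ) : (((a : ℂ))⁻¹ * b) * (((c : ℂ))⁻¹ * a) = ((c : ℂ))⁻¹ * b := by
  field_simp

lemma cancel3' (a b c : ℂˣ) : (((c : ℂ))⁻¹ * a) * (((a : ℂ))⁻¹ * b) = ((c : ℂ))⁻¹ * b := by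
  field_simp

lemma telC : ∀ k j, k = n - j → j ≤ n →
    ∏ v ∈ Finset.Icc (j + 1) n, wfa (n := n) (ℓ := ℓ) L μ (cc n ℓ v)
      = (μ ((n : ℕ) : Fin (n + 1)) : ℂ)⁻¹ * μ ((j : ℕ) : Fin (n + 1)) := by
  intro k
  induction k with
  | zero =>
      intro j hk hj
      have : j = n := by omega
      subst this
      rw [Finset.Icc_eq_empty (by omega), Finset.prod_empty,
        inv_mul_cancel₀ (Units.ne_zero _)]
  | succ k ih =>
      intro j hk hj
      have hjn : j < n := by omega
      have hins : Finset.Icc (j + 1) n = insert (j + 1) (Finset.Icc (j + 2) n) := by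
        ext x; simp only [Finset.mem_Icc, Finset.mem_insert]; omega
      rw [hins, Finset.prod_insert (by intro hmem; simp only [Finset.mem_Icc] at hmem; omega), ih (j + 1) (by omega) (by omega),
        wfa, tl_cc, hd_cc (by omega) (by omega), show j + 1 - 1 = j by omega]
      exact cancel3 (μ ((j+1 : ℕ) : Fin (n+1))) (μ ((j : ℕ) : Fin (n+1))) (μ ((n : ℕ) : Fin (n+1)))

lemma telA : ∀ j, j ≤ n →
    ∏ v ∈ Finset.range j, wfa (n := n) (ℓ := ℓ) L μ (aa n ℓ v)
      = (μ (((0 : ℕ) : Fin (n + 1))) : ℂ)⁻¹ * μ ((j : ℕ) : Fin (n + 1)) := by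
  intro j
  induction j with
  | zero => simp
  | succ j ih =>
      intro hj
      rw [Finset.prod_range_succ, ih (by omega), wfa, tl_aa, hd_aa (by omega)]
      exact cancel3' (μ ((j : ℕ) : Fin (n+1))) (μ ((j+1 : ℕ) : Fin (n+1))) (μ ((0 : ℕ) : Fin (n+1)))

lemma scalC {j : ℕ} (hj : j ≤ n) :
    wfa (n := n) (ℓ := ℓ) L μ (cc n ℓ 0)
        * ∏ v ∈ Finset.Icc (j + 1) n, wfa (n := n) (ℓ := ℓ) L μ (cc n ℓ v)
      = (μ (((0 : ℕ) : Fin (n + 1))) : ℂ)⁻¹ * μ ((j : ℕ) : Fin (n + 1)) := by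
  rw [telC L μ (n - j) j rfl hj, wfa, tl_cc, hd_cc0]
  exact cancel3' (μ ((n : ℕ) : Fin (n+1))) (μ ((j : ℕ) : Fin (n+1))) (μ ((0 : ℕ) : Fin (n+1)))

lemma scalK (hn1 : 1 ≤ n) (hL0 : L 0 = 1) (hLtop : L (ℓ + 1) = n) {i : ℕ} (hi : i ≤ ℓ + 1) :
    wfa (n := n) (ℓ := ℓ) L μ (kArr n ℓ i)
      = (μ ((L i : ℕ) : Fin (n + 1)) : ℂ)⁻¹ * μ (((0 : ℕ) : Fin (n + 1))) := by
  rw [wfa, tl_kArr L hL0 hLtop hi, hd_kArr hn1]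
  norm_num

lemma prod_shift (c : Fin (n + 1)) (f : Fin (n + 1) → ℂ) :
    ∏ v : Fin (n + 1), f (v + c) = ∏ v : Fin (n + 1), f v :=
  Equiv.prod_comp (Equiv.addRight c) f

lemma loopC_scal : ∏ v ∈ Finset.range (n + 1), wfa (n := n) (ℓ := ℓ) L μ (cc n ℓ v) = 1 := by
  simp only [wfa, tl_cc]
  rw [Finset.prod_mul_distrib, Finset.prod_inv_distrib]
  have h1 : ∏ v ∈ Finset.range (n + 1), (μ (hd n ℓ (cc n ℓ v)) : ℂ)
      = ∏ v : Fin (n + 1), (μ v : ℂ) := by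
    rw [← Fin.prod_univ_eq_prod_range (fun v => (μ (hd n ℓ (cc n ℓ v)) : ℂ)) (n + 1)]
    rw [← prod_shift ((n : ℕ) : Fin (n + 1)) (fun v => (μ v : ℂ))]
    refine Finset.prod_congr rfl fun u _ => ?_
    have harg : hd n ℓ (cc n ℓ (u : ℕ)) = u + ((n : ℕ) : Fin (n + 1)) := by
      show ((((u : ℕ) : Fin (n+1)).val + n : ℕ) : Fin (n + 1)) = u + ((n : ℕ) : Fin (n + 1))
      rw [Fin.cast_val_eq_self u, Nat.cast_add, Fin.cast_val_eq_self u]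
    rw [harg]
  have h2 : ∏ v ∈ Finset.range (n + 1), (μ (((v : ℕ) : Fin (n + 1))) : ℂ)
      = ∏ v : Fin (n + 1), (μ v : ℂ) := by
    rw [← Fin.prod_univ_eq_prod_range (fun v => (μ ((v : ℕ) : Fin (n + 1)) : ℂ)) (n + 1)]
    exact Finset.prod_congr rfl fun u _ => by rw [Fin.cast_val_eq_self u]
  rw [h1, h2, inv_mul_cancel₀]
  exact Finset.prod_ne_zero_iff.mpr fun v _ => Units.ne_zero _

lemma loopA_scal : ∏ v ∈ Finset.range (n + 1), wfa (n := n) (ℓ := ℓ) L μ (aa n ℓ v) = 1 := by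
  simp only [wfa, tl_aa]
  rw [Finset.prod_mul_distrib, Finset.prod_inv_distrib]
  have h1 : ∏ v ∈ Finset.range (n + 1), (μ (hd n ℓ (aa n ℓ v)) : ℂ)
      = ∏ v : Fin (n + 1), (μ v : ℂ) := by
    rw [← Fin.prod_univ_eq_prod_range (fun v => (μ (hd n ℓ (aa n ℓ v)) : ℂ)) (n + 1)]
    rw [← prod_shift ((1 : ℕ) : Fin (n + 1)) (fun v => (μ v : ℂ))]
    refine Finset.prod_congr rfl fun u _ => ?_
    have harg : hd n ℓ (aa n ℓ (u : ℕ)) = u + ((1 : ℕ) : Fin (n + 1)) := by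
      show ((((u : ℕ) : Fin (n+1)).val + 1 : ℕ) : Fin (n + 1)) = u + ((1 : ℕ) : Fin (n + 1))
      rw [Fin.cast_val_eq_self u, Nat.cast_add, Fin.cast_val_eq_self u]
    rw [harg]
  have h2 : ∏ v ∈ Finset.range (n + 1), (μ (((v : ℕ) : Fin (n + 1))) : ℂ)
      = ∏ v : Fin (n + 1), (μ v : ℂ) := by
    rw [← Fin.prod_univ_eq_prod_range (fun v => (μ ((v : ℕ) : Fin (n + 1)) : ℂ)) (n + 1)]
    exact Finset.prod_congr rfl fun u _ => by rw [Fin.cast_val_eq_self u]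
  rw [h1, h2, inv_mul_cancel₀]
  exact Finset.prod_ne_zero_iff.mpr fun v _ => Units.ne_zero _

end Scal
section ZInv
variable {n ℓ : ℕ} (L : ℕ → ℕ) (μ : Fin (n + 1) → ℂˣ)

lemma act_xC0 {j : ℕ} (hj : j ≤ n) :
    torusAct n ℓ L μ (xC0 n ℓ j)
      = C ((μ (((0 : ℕ) : Fin (n + 1))) : ℂ)⁻¹ * μ ((j : ℕ) : Fin (n + 1))) * xC0 n ℓ j := by
  rw [xC0, map_mul, act_X, act_prodX, ← scalC L μ hj, C_mul]
  ring

lemma act_xA0 {j : ℕ} (hj : j ≤ n) :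
    torusAct n ℓ L μ (xA0 n ℓ j)
      = C ((μ (((0 : ℕ) : Fin (n + 1))) : ℂ)⁻¹ * μ ((j : ℕ) : Fin (n + 1))) * xA0 n ℓ j := by
  rw [xA0, act_prodX, telA L μ j hj]

lemma zmon_inv (hn1 : 1 ≤ n) (hL0 : L 0 = 1) (hLtop : L (ℓ + 1) = n)
    (hLle : ∀ i, i ≤ ℓ + 1 → L i ≤ n) {i : ℕ} (hi : i ≤ ℓ + 2) (j : ℕ) :
    torusAct n ℓ L μ (zmon n ℓ L i j) = zmon n ℓ L i j := by
  rw [zmon]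
  split_ifs with h1 h2 h3 h4
  · rw [act_prodX, loopC_scal, map_one, one_mul]
  · rw [act_prodX, loopA_scal, map_one, one_mul]
  · have hi1 : i ≤ ℓ + 1 := by omega
    rw [map_mul, act_xC0 L μ (hLle i hi1), act_X,
      scalK L μ hn1 hL0 hLtop hi1, mul_mul_mul_comm, ← C_mul,
      unit_cancel (μ (((0 : ℕ) : Fin (n + 1)))) (μ ((L i : ℕ) : Fin (n + 1))), C_1, one_mul]
  · have hi1 : i - 1 ≤ ℓ + 1 := by omega
    rw [map_mul, act_xA0 L μ (hLle (i - 1) hi1), act_X,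
      scalK L μ hn1 hL0 hLtop hi1, mul_mul_mul_comm, ← C_mul,
      unit_cancel (μ (((0 : ℕ) : Fin (n + 1)))) (μ ((L (i - 1) : ℕ) : Fin (n + 1))), C_1,
      one_mul]
  · have hv2 : L i - j + 1 ≤ n := by
      have := hLle i (by omega)
      omega
    rw [map_mul, act_X, act_X, wfa, wfa, tl_cc, tl_aa, hd_cc (by omega) hv2,
      hd_aa (by omega : L i - j < n), show L i - j + 1 - 1 = L i - j by omega,
      mul_mul_mul_comm, ← C_mul,
      unit_cancel (μ ((L i - j + 1 : ℕ) : Fin (n + 1))) (μ ((L i - j : ℕ) : Fin (n + 1))),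
      C_1, one_mul]

lemma zmon_mem_invAlg (hn1 : 1 ≤ n) (hL0 : L 0 = 1) (hLtop : L (ℓ + 1) = n)
    (hLle : ∀ i, i ≤ ℓ + 1 → L i ≤ n) {i : ℕ} (hi : i ≤ ℓ + 2) (j : ℕ) :
    zmon n ℓ L i j ∈ invAlg n ℓ L :=
  fun μ => zmon_inv L μ hn1 hL0 hLtop hLle hi j

lemma zexp_balanced (hn1 : 1 ≤ n) (hL0 : L 0 = 1) (hLtop : L (ℓ + 1) = n)
    (hLle : ∀ i, i ≤ ℓ + 1 → L i ≤ n) {i : ℕ} (hi : i ≤ ℓ + 2) (j : ℕ) :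
    ∀ v, flowIn n ℓ (zexp n ℓ L i j) v = flowOut n ℓ L (zexp n ℓ L i j) v := by
  have hmem := zmon_mem_invAlg L hn1 hL0 hLtop hLle hi j
  rw [mem_invAlg_iff, zmon_eq] at hmem
  exact hmem (zexp n ℓ L i j) (by rw [support_monomial, if_neg one_ne_zero]; simp)

end ZInv
section Flow
variable {n ℓ : ℕ} (L : ℕ → ℕ)

lemma cast_n_eq_neg_one : ((n : ℕ) : Fin (n + 1)) = -1 := by
  have h : ((n : ℕ) : Fin (n + 1)) + 1 = 0 := by
    have h2 : (((n + 1 : ℕ)) : Fin (n + 1)) = 0 := Fin.natCast_self (n + 1)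
    rw [Nat.cast_add, Nat.cast_one] at h2
    exact h2
  exact eq_neg_of_add_eq_zero_left h

lemma flowOut_eq (d : Arrow n ℓ →₀ ℕ) (v : Fin (n + 1)) :
    flowOut n ℓ L d v = d (Sum.inl v) + d (Sum.inr (Sum.inl v))
      + ∑ h : Fin ℓ, (if ((L (h.val + 1) : ℕ) : Fin (n + 1)) = v
          then d (Sum.inr (Sum.inr h)) else 0) := by
  rw [flowOut, Fintype.sum_sum_type, Fintype.sum_sum_type]
  have e1 : ∑ u : Fin (n + 1), (if tl n ℓ L (Sum.inl u) = v then d (Sum.inl u) else 0)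
      = d (Sum.inl v) := by
    show (∑ u : Fin (n + 1), if u = v then d (Sum.inl u) else 0) = _
    simp
  have e2 : ∑ u : Fin (n + 1),
        (if tl n ℓ L (Sum.inr (Sum.inl u)) = v then d (Sum.inr (Sum.inl u)) else 0)
      = d (Sum.inr (Sum.inl v)) := by
    show (∑ u : Fin (n + 1), if u = v then d (Sum.inr (Sum.inl u)) else 0) = _
    simp
  rw [e1, e2, add_assoc]
  rfl

lemma flowIn_eq (d : Arrow n ℓ →₀ ℕ) (v : Fin (n + 1)) :
    flowIn n ℓ d v = d (Sum.inl (v + 1)) + d (Sum.inr (Sum.inl (v - 1)))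
      + (if v = 0 then ∑ h : Fin ℓ, d (Sum.inr (Sum.inr h)) else 0) := by
  rw [flowIn, Fintype.sum_sum_type, Fintype.sum_sum_type]
  have h1 : ∀ u : Fin (n + 1), hd n ℓ (Sum.inl u) = u - 1 := by
    intro u
    show ((u.val + n : ℕ) : Fin (n + 1)) = u - 1
    rw [Nat.cast_add, Fin.cast_val_eq_self, cast_n_eq_neg_one, ← sub_eq_add_neg]
  have h2 : ∀ u : Fin (n + 1), hd n ℓ (Sum.inr (Sum.inl u)) = u + 1 := by
    intro u
    show ((u.val + 1 : ℕ) : Fin (n + 1)) = u + 1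
    rw [Nat.cast_add, Fin.cast_val_eq_self, Nat.cast_one]
  have e1 : ∑ u : Fin (n + 1), (if hd n ℓ (Sum.inl u) = v then d (Sum.inl u) else 0)
      = d (Sum.inl (v + 1)) := by
    simp only [h1, sub_eq_iff_eq_add]
    rw [Finset.sum_ite_eq' Finset.univ (v + 1) (fun u => d (Sum.inl u))]
    simp
  have e2 : ∑ u : Fin (n + 1),
        (if hd n ℓ (Sum.inr (Sum.inl u)) = v then d (Sum.inr (Sum.inl u)) else 0)
      = d (Sum.inr (Sum.inl (v - 1))) := by
    simp only [h2, ← eq_sub_iff_add_eq]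
    rw [Finset.sum_ite_eq' Finset.univ (v - 1) (fun u => d (Sum.inr (Sum.inl u)))]
    simp
  have e3 : ∑ u : Fin ℓ,
        (if hd n ℓ (Sum.inr (Sum.inr u)) = v then d (Sum.inr (Sum.inr u)) else 0)
      = (if v = 0 then ∑ h : Fin ℓ, d (Sum.inr (Sum.inr h)) else 0) := by
    show (∑ u : Fin ℓ, if (0 : Fin (n+1)) = v then d (Sum.inr (Sum.inr u)) else 0) = _
    by_cases hv : v = 0
    · subst hv; simp
    · rw [if_neg hv, Finset.sum_eq_zero]
      intro u _
      rw [if_neg (fun hh => hv hh.symm)]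
  rw [e1, e2, e3, add_assoc]

lemma flowIn_add (c e : Arrow n ℓ →₀ ℕ) (v : Fin (n + 1)) :
    flowIn n ℓ (c + e) v = flowIn n ℓ c v + flowIn n ℓ e v := by
  rw [flowIn, flowIn, flowIn, ← Finset.sum_add_distrib]
  refine Finset.sum_congr rfl fun q _ => ?_
  rw [Finsupp.add_apply]
  split_ifs <;> simp

lemma flowOut_add (c e : Arrow n ℓ →₀ ℕ) (v : Fin (n + 1)) :
    flowOut n ℓ L (c + e) v = flowOut n ℓ L c v + flowOut n ℓ L e v := by
  rw [flowOut, flowOut, flowOut, ← Finset.sum_add_distrib]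
  refine Finset.sum_congr rfl fun q _ => ?_
  rw [Finsupp.add_apply]
  split_ifs <;> simp

def deg {n ℓ : ℕ} (d : Arrow n ℓ →₀ ℕ) : ℕ := ∑ q : Arrow n ℓ, d q

lemma deg_add (c e : Arrow n ℓ →₀ ℕ) : deg (c + e) = deg c + deg e := by
  rw [deg, deg, deg, ← Finset.sum_add_distrib]
  exact Finset.sum_congr rfl fun q _ => Finsupp.add_apply c e q

lemma deg_eq_zero_iff (d : Arrow n ℓ →₀ ℕ) : deg d = 0 ↔ d = 0 := by
  rw [deg, Finset.sum_eq_zero_iff]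
  constructor
  · intro h
    ext q
    exact h q (Finset.mem_univ q)
  · intro h q _
    rw [h]
    rfl

end Flow
section LeLemmas
variable {n ℓ : ℕ}

lemma cc_inj {u v : ℕ} (hu : u ≤ n) (hv : v ≤ n) (h : cc n ℓ u = cc n ℓ v) : u = v := by
  rw [cc, cc] at h
  have := congrArg Fin.val (Sum.inl.inj h)
  rwa [val_cast_le hu, val_cast_le hv] at this

lemma aa_inj {u v : ℕ} (hu : u ≤ n) (hv : v ≤ n) (h : aa n ℓ u = aa n ℓ v) : u = v := by
  rw [aa, aa] at h
  have := congrArg Fin.val (Sum.inr.inj h |> Sum.inl.inj)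
  rwa [val_cast_le hu, val_cast_le hv] at this

lemma sum_single_apply (s : Finset ℕ) (g : ℕ → Arrow n ℓ) (p : Arrow n ℓ) :
    (∑ v ∈ s, Finsupp.single (g v) 1) p = ∑ v ∈ s, (if g v = p then 1 else 0) := by
  rw [Finset.sum_apply']
  exact Finset.sum_congr rfl fun v _ => Finsupp.single_apply

lemma sum_single_le (s : Finset ℕ) (g : ℕ → Arrow n ℓ) (d : Arrow n ℓ →₀ ℕ)
    (hinj : ∀ u ∈ s, ∀ v ∈ s, g u = g v → u = v)
    (hge : ∀ v ∈ s, 1 ≤ d (g v)) :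
    ∑ v ∈ s, Finsupp.single (g v) 1 ≤ d := by
  rw [Finsupp.le_def]
  intro p
  rw [sum_single_apply]
  by_cases hex : ∃ v ∈ s, g v = p
  · obtain ⟨v0, hv0, hg0⟩ := hex
    rw [Finset.sum_eq_single v0]
    · rw [if_pos hg0, ← hg0]
      exact hge v0 hv0
    · intro v hvs hne
      rw [if_neg]
      intro hgp
      exact hne (hinj v hvs v0 hv0 (hgp.trans hg0.symm))
    · intro h
      exact absurd hv0 h
  · rw [Finset.sum_eq_zero]
    · exact Nat.zero_le _
    · intro v hvs
      rw [if_neg (fun hh => hex ⟨v, hvs, hh⟩)]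

lemma sum_single_add_single_le (s : Finset ℕ) (g : ℕ → Arrow n ℓ) (q0 : Arrow n ℓ)
    (d : Arrow n ℓ →₀ ℕ)
    (hinj : ∀ u ∈ s, ∀ v ∈ s, g u = g v → u = v)
    (hq0 : ∀ v ∈ s, g v ≠ q0)
    (hge : ∀ v ∈ s, 1 ≤ d (g v)) (h0 : 1 ≤ d q0) :
    (∑ v ∈ s, Finsupp.single (g v) 1) + Finsupp.single q0 1 ≤ d := by
  rw [Finsupp.le_def]
  intro p
  rw [Finsupp.add_apply, sum_single_apply]
  by_cases hp : p = q0
  · subst hp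
    rw [Finset.sum_eq_zero, Finsupp.single_eq_same]
    · exact h0
    · intro v hvs
      rw [if_neg (hq0 v hvs)]
  · rw [Finsupp.single_eq_of_ne hp, add_zero]
    have := sum_single_le s g d hinj hge
    rw [Finsupp.le_def] at this
    have h2 := this p
    rwa [sum_single_apply] at h2

lemma single_add_single_le (q0 q1 : Arrow n ℓ) (d : Arrow n ℓ →₀ ℕ) (hne : q0 ≠ q1)
    (h0 : 1 ≤ d q0) (h1 : 1 ≤ d q1) :
    Finsupp.single q0 1 + Finsupp.single q1 1 ≤ d := by
  rw [Finsupp.le_def]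
  intro p
  rw [Finsupp.add_apply]
  by_cases hp0 : p = q0
  · subst hp0
    rw [Finsupp.single_eq_same, Finsupp.single_eq_of_ne hne, add_zero]
    exact h0
  · rw [Finsupp.single_eq_of_ne hp0, zero_add]
    by_cases hp1 : p = q1
    · subst hp1
      rw [Finsupp.single_eq_same]
      exact h1
    · rw [Finsupp.single_eq_of_ne hp1]
      exact Nat.zero_le _

lemma sum_single_apply_self (s : Finset ℕ) (g : ℕ → Arrow n ℓ) (v0 : ℕ) (hv0 : v0 ∈ s) :
    1 ≤ (∑ v ∈ s, Finsupp.single (g v) 1) (g v0) := by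
  rw [sum_single_apply]
  calc 1 = if g v0 = g v0 then 1 else 0 := by rw [if_pos rfl]
  _ ≤ _ := Finset.single_le_sum (f := fun v => if g v = g v0 then 1 else 0)
      (fun v _ => by positivity) hv0

end LeLemmas
section BalN
variable {n ℓ : ℕ} (L : ℕ → ℕ) (d : Arrow n ℓ →₀ ℕ)

def Cf (d : Arrow n ℓ →₀ ℕ) (v : ℕ) : ℕ := d (Sum.inl ((v : ℕ) : Fin (n + 1)))
def Af (d : Arrow n ℓ →₀ ℕ) (v : ℕ) : ℕ := d (Sum.inr (Sum.inl ((v : ℕ) : Fin (n + 1))))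
def KSf (L : ℕ → ℕ) (d : Arrow n ℓ →₀ ℕ) (v : ℕ) : ℕ :=
  ∑ h : Fin ℓ, if ((L (h.val + 1) : ℕ) : Fin (n + 1)) = ((v : ℕ) : Fin (n + 1))
    then d (Sum.inr (Sum.inr h)) else 0
def gf (d : Arrow n ℓ →₀ ℕ) (v : ℕ) : ℤ := (Cf d v : ℤ) - (Af d (v - 1) : ℤ)

lemma hcast1 (v : ℕ) : ((v : ℕ) : Fin (n + 1)) + 1 = ((v + 1 : ℕ) : Fin (n + 1)) := by
  rw [Nat.cast_add, Nat.cast_one]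

lemma hcastsub (v : ℕ) (hv : 1 ≤ v) :
    ((v : ℕ) : Fin (n + 1)) - 1 = ((v - 1 : ℕ) : Fin (n + 1)) := by
  rw [sub_eq_iff_eq_add, hcast1 (v - 1)]
  congr 1
  omega

lemma hne0 (v : ℕ) (h1 : 1 ≤ v) (h2 : v ≤ n) : ((v : ℕ) : Fin (n + 1)) ≠ 0 := by
  intro hh
  have := congrArg Fin.val hh
  rw [val_cast_le h2] at this
  simp at this
  omega

lemma Cwrap : Cf d (n + 1) = Cf d 0 := by
  rw [Cf, Cf, Fin.natCast_self, Nat.cast_zero]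

lemma balN (hbal : ∀ v, flowIn n ℓ d v = flowOut n ℓ L d v) (v : ℕ)
    (h1 : 1 ≤ v) (h2 : v ≤ n) :
    Cf d (v + 1) + Af d (v - 1) = Cf d v + Af d v + KSf L d v := by
  have hb := hbal ((v : ℕ) : Fin (n + 1))
  rw [flowIn_eq, flowOut_eq L, hcast1 v, hcastsub v h1, if_neg (hne0 v h1 h2), add_zero] at hb
  exact hb

lemma bal0 (hbal : ∀ v, flowIn n ℓ d v = flowOut n ℓ L d v)
    (hLrange : ∀ h, 1 ≤ h → h ≤ ℓ → 1 ≤ L h ∧ L h ≤ n) :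
    Cf d 1 + Af d n + (∑ h : Fin ℓ, d (Sum.inr (Sum.inr h))) = Cf d 0 + Af d 0 := by
  have hb := hbal (0 : Fin (n + 1))
  rw [flowIn_eq, flowOut_eq L, if_pos rfl] at hb
  have hK0 : (∑ h : Fin ℓ, if ((L (h.val + 1) : ℕ) : Fin (n + 1)) = (0 : Fin (n + 1))
      then d (Sum.inr (Sum.inr h)) else 0) = 0 := by
    refine Finset.sum_eq_zero fun h _ => ?_
    have hr := hLrange (h.val + 1) (by omega) (by omega)
    rw [if_neg (hne0 _ hr.1 hr.2)]
  rw [hK0, add_zero] at hb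
  have e1 : (0 : Fin (n + 1)) + 1 = ((1 : ℕ) : Fin (n + 1)) := by
    rw [zero_add, Nat.cast_one]
  have e2 : (0 : Fin (n + 1)) - 1 = ((n : ℕ) : Fin (n + 1)) := by
    rw [cast_n_eq_neg_one, zero_sub]
  rw [e1, e2] at hb
  have e3 : d (Sum.inl ((1 : ℕ) : Fin (n + 1))) = Cf d 1 := rfl
  have e4 : d (Sum.inr (Sum.inl ((n : ℕ) : Fin (n + 1)))) = Af d n := rfl
  have e5 : d (Sum.inl (0 : Fin (n + 1))) = Cf d 0 := by rw [Cf, Nat.cast_zero]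
  have e6 : d (Sum.inr (Sum.inl (0 : Fin (n + 1)))) = Af d 0 := by rw [Af, Nat.cast_zero]
  rw [e3, e4, e5, e6] at hb
  exact hb

lemma gstep (hbal : ∀ v, flowIn n ℓ d v = flowOut n ℓ L d v) (v : ℕ)
    (h1 : 1 ≤ v) (h2 : v ≤ n) :
    gf d (v + 1) = gf d v + (KSf L d v : ℤ) := by
  have hb := balN L d hbal v h1 h2
  rw [gf, gf, show v + 1 - 1 = v by omega]
  omega

lemma gmono (hbal : ∀ v, flowIn n ℓ d v = flowOut n ℓ L d v) :
    ∀ u v, 1 ≤ u → u ≤ v → v ≤ n + 1 → gf d u ≤ gf d v := by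
  intro u v hu huv hv
  induction v with
  | zero => omega
  | succ k ih =>
      rcases Nat.lt_or_ge u (k + 1) with hlt | hge
      · have hk1 : 1 ≤ k := by omega
        have h2 : gf d k ≤ gf d (k + 1) := by
          rw [gstep L d hbal k hk1 (by omega)]
          have : (0 : ℤ) ≤ (KSf L d k : ℤ) := Int.natCast_nonneg _
          omega
        exact le_trans (ih (by omega) (by omega)) h2
      · have : u = k + 1 := by omega
        subst this
        exact le_refl _

end BalN
section Cycle
variable {n ℓ : ℕ}

lemma fs_ne_zero {c : Arrow n ℓ →₀ ℕ} {q : Arrow n ℓ} (h : 1 ≤ c q) : c ≠ 0 := by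
  intro h0
  rw [h0] at h
  simp at h

lemma exists_cycle (L : ℕ → ℕ) (hn1 : 1 ≤ n) (hL0 : L 0 = 1) (hLtop : L (ℓ + 1) = n)
    (hLrange : ∀ h, 1 ≤ h → h ≤ ℓ → 1 ≤ L h ∧ L h ≤ n)
    (d : Arrow n ℓ →₀ ℕ) (hbal : ∀ v, flowIn n ℓ d v = flowOut n ℓ L d v) (hne : d ≠ 0) :
    ∃ i j : ℕ, i ≤ ℓ + 2 ∧ (1 ≤ i ∧ i ≤ ℓ + 1 → j ≤ L i - L (i - 1) + 1) ∧
      ((i = 0 ∨ i = ℓ + 2) → j = 0) ∧ zexp n ℓ L i j ≤ d ∧ zexp n ℓ L i j ≠ 0 := by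
  by_cases hcase : ∃ v, 1 ≤ v ∧ v ≤ n + 1 ∧ 1 ≤ Cf d v ∧ 1 ≤ Af d (v - 1)
  · obtain ⟨v, hv1, hv2, hCv, hAv⟩ := hcase
    rcases Nat.lt_or_ge v 2 with hvlt1 | hvge2
    · -- v = 1 : use (1, L 1 - L 0 + 1)
      have hveq : v = 1 := by omega
      subst hveq
      have hz : zexp n ℓ L 1 (L 1 - L 0 + 1)
          = Finsupp.single (aa n ℓ 0) 1 + Finsupp.single (cc n ℓ 1) 1 := by
        rw [zexp, if_neg (by omega : ¬ (1 = 0)), if_neg (by omega : ¬ (1 = ℓ + 2)),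
          if_neg (by omega : ¬ (L 1 - L 0 + 1 = 0)), if_pos (by norm_num),
          eA0, hL0, Finset.range_one, Finset.sum_singleton, kArr_zero]
      refine ⟨1, L 1 - L 0 + 1, by omega, fun _ => by norm_num, by omega, ?_, ?_⟩
      · rw [hz]
        refine single_add_single_le _ _ d (by simp [aa, cc]) ?_ ?_
        · exact hAv
        · exact hCv
      · rw [hz]
        refine fs_ne_zero (q := aa n ℓ 0) ?_
        rw [Finsupp.add_apply, Finsupp.single_eq_same]
        exact Nat.le_add_right 1 _
    rcases Nat.lt_or_ge v (n + 1) with hvlt | hvge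
    · -- 2 ≤ v ≤ n : middle two-cycle
      have hex : ∃ t, v ≤ L t := ⟨ℓ + 1, by rw [hLtop]; omega⟩
      set t := Nat.find hex with htdef
      have ht : v ≤ L t := Nat.find_spec hex
      have htle : t ≤ ℓ + 1 := Nat.find_min' hex (by rw [hLtop]; omega)
      have ht1 : 1 ≤ t := by
        by_contra hcon
        have h0 : t = 0 := by omega
        rw [h0, hL0] at ht
        omega
      have htprev : L (t - 1) < v := by
        have := Nat.find_min hex (m := t - 1) (by omega)
        omega
      have hz : zexp n ℓ L t (L t - v + 1)
          = Finsupp.single (cc n ℓ v) 1 + Finsupp.single (aa n ℓ (v - 1)) 1 := by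
        rw [zexp, if_neg (by omega : ¬ (t = 0)), if_neg (by omega : ¬ (t = ℓ + 2)),
          if_neg (by omega : ¬ (L t - v + 1 = 0)),
          if_neg (by omega : ¬ (L t - v + 1 = L t - L (t - 1) + 1)),
          show L t - (L t - v + 1) + 1 = v by omega,
          show L t - (L t - v + 1) = v - 1 by omega]
      refine ⟨t, L t - v + 1, by omega, fun _ => by omega, by omega, ?_, ?_⟩
      · rw [hz]
        refine single_add_single_le _ _ d (by simp [aa, cc]) hCv ?_
        show 1 ≤ Af d (v - 1)
        exact hAv
      · rw [hz]
        refine fs_ne_zero (q := cc n ℓ v) ?_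
        rw [Finsupp.add_apply, Finsupp.single_eq_same]
        exact Nat.le_add_right 1 _
    · -- v = n + 1 : edge (n, 0)
      have hveq : v = n + 1 := by omega
      subst hveq
      have hz : zexp n ℓ L (ℓ + 1) 0
          = Finsupp.single (cc n ℓ 0) 1 + Finsupp.single (aa n ℓ n) 1 := by
        rw [zexp, if_neg (by omega : ¬ (ℓ + 1 = 0)), if_neg (by omega : ¬ (ℓ + 1 = ℓ + 2)),
          if_pos rfl, eC0, hLtop, Finset.Icc_eq_empty (by omega), Finset.sum_empty,
          add_zero, kArr_top (by omega)]
      refine ⟨ℓ + 1, 0, by omega, fun _ => by omega, by omega, ?_, ?_⟩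
      · rw [hz]
        refine single_add_single_le _ _ d (by simp [aa, cc]) ?_ ?_
        · show 1 ≤ Cf d 0
          rw [← Cwrap d]
          exact hCv
        · show 1 ≤ Af d ((n + 1) - 1)
          exact hAv
      · rw [hz]
        refine fs_ne_zero (q := cc n ℓ 0) ?_
        rw [Finsupp.add_apply, Finsupp.single_eq_same]
        exact Nat.le_add_right 1 _
  · push_neg at hcase
    by_cases hK : ∀ h : Fin ℓ, d (Sum.inr (Sum.inr h)) = 0
    · -- no extra arrows used
      have hKS0 : ∀ v, KSf L d v = 0 := by
        intro v
        refine Finset.sum_eq_zero fun h _ => ?_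
        rw [hK h]
        split_ifs <;> rfl
      have hgconst : ∀ v, 1 ≤ v → v ≤ n + 1 → gf d v = gf d 1 := by
        intro v
        induction v with
        | zero => omega
        | succ k ih =>
            intro h1 h2
            rcases Nat.lt_or_ge k 1 with hk | hk
            · have : k = 0 := by omega
              subst this
              rfl
            · rw [gstep L d hbal k hk (by omega), hKS0, ih (by omega) (by omega)]
              omega
      rcases lt_trichotomy (gf d 1) 0 with hneg | hzero | hpos
      · -- anticlockwise loop
        have hA : ∀ v, v ≤ n → 1 ≤ Af d v := by
          intro v hv
          have h1 := hgconst (v + 1) (by omega) (by omega)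
          rw [gf, show v + 1 - 1 = v by omega] at h1
          omega
        have hz : zexp n ℓ L (ℓ + 2) 0
            = ∑ v ∈ Finset.range (n + 1), Finsupp.single (aa n ℓ v) 1 := by
          rw [zexp, if_neg (by omega : ¬ (ℓ + 2 = 0)), if_pos rfl]
        refine ⟨ℓ + 2, 0, by omega, by omega, fun _ => rfl, ?_, ?_⟩
        · rw [hz]
          refine sum_single_le _ _ d ?_ ?_
          · intro a ha b hb hab
            rw [Finset.mem_range] at ha hb
            exact aa_inj (by omega) (by omega) hab
          · intro v hv
            rw [Finset.mem_range] at hv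
            exact hA v (by omega)
        · rw [hz]
          exact fs_ne_zero (sum_single_apply_self _ _ 0 (by simp))
      · -- d = 0, contradiction
        exfalso
        apply hne
        ext q
        show d q = 0
        rcases q with u | u | h
        · set v : ℕ := if u.val = 0 then n + 1 else u.val with hvdef
          have hv1 : 1 ≤ v := by rw [hvdef]; split_ifs <;> omega
          have hv2 : v ≤ n + 1 := by
            rw [hvdef]
            split_ifs <;> omega
          have hcast : ((v : ℕ) : Fin (n + 1)) = u := by
            rw [hvdef]
            split_ifs with h0
            · rw [Fin.natCast_self]
              exact (Fin.ext h0).symm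
            · exact Fin.cast_val_eq_self u
          have hg : gf d v = 0 := (hgconst v hv1 hv2).trans hzero
          have hgv : gf d v = (Cf d v : ℤ) - Af d (v - 1) := rfl
          have hdich := hcase v hv1 hv2
          have hC0 : Cf d v = 0 := by omega
          rw [← hcast]
          exact hC0
        · have hu := u.isLt
          have hv1 : 1 ≤ u.val + 1 := by omega
          have hv2 : u.val + 1 ≤ n + 1 := by omega
          have hg : gf d (u.val + 1) = 0 := (hgconst (u.val + 1) hv1 hv2).trans hzero
          have hgv : gf d (u.val + 1) = (Cf d (u.val + 1) : ℤ) - Af d (u.val + 1 - 1) := rfl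
          have hdich := hcase (u.val + 1) hv1 hv2
          have hA0 : Af d (u.val + 1 - 1) = 0 := by omega
          rw [show u.val + 1 - 1 = u.val from rfl] at hA0
          rw [← Fin.cast_val_eq_self u]
          exact hA0
        · exact hK h
      · -- clockwise loop
        have hC : ∀ v, 1 ≤ v → v ≤ n + 1 → 1 ≤ Cf d v := by
          intro v h1 h2
          have hg := hgconst v h1 h2
          rw [gf] at hg
          omega
        have hz : zexp n ℓ L 0 0
            = ∑ v ∈ Finset.range (n + 1), Finsupp.single (cc n ℓ v) 1 := by
          rw [zexp, if_pos rfl]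
        refine ⟨0, 0, by omega, by omega, fun _ => rfl, ?_, ?_⟩
        · rw [hz]
          refine sum_single_le _ _ d ?_ ?_
          · intro a ha b hb hab
            rw [Finset.mem_range] at ha hb
            exact cc_inj (by omega) (by omega) hab
          · intro v hv
            rw [Finset.mem_range] at hv
            rcases Nat.eq_zero_or_pos v with h0 | h1
            · subst h0
              show 1 ≤ Cf d 0
              rw [← Cwrap d]
              exact hC (n + 1) (by omega) (by omega)
            · exact hC v h1 (by omega)
        · rw [hz]
          exact fs_ne_zero (sum_single_apply_self _ _ 0 (by simp))
    · -- some extra arrow used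
      push_neg at hK
      obtain ⟨h0, hKh0⟩ := hK
      have hlt := h0.isLt
      have hl1 : 1 ≤ ℓ := by omega
      have hrange := hLrange (h0.val + 1) (by omega) (by omega)
      set w := L (h0.val + 1) with hwdef
      have hKS : 1 ≤ KSf L d w := by
        have hle : (if ((L (h0.val + 1) : ℕ) : Fin (n + 1)) = ((w : ℕ) : Fin (n + 1))
            then d (Sum.inr (Sum.inr h0)) else 0) ≤ KSf L d w :=
          Finset.single_le_sum (f := fun h : Fin ℓ =>
            if ((L (h.val + 1) : ℕ) : Fin (n + 1)) = ((w : ℕ) : Fin (n + 1))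
              then d (Sum.inr (Sum.inr h)) else 0)
            (fun h _ => Nat.zero_le _) (Finset.mem_univ h0)
        rw [if_pos (by rw [← hwdef])] at hle
        omega
      have hgw : gf d w + 1 ≤ gf d (w + 1) := by
        rw [gstep L d hbal w hrange.1 hrange.2]
        omega
      have hk0eq : kArr n ℓ (h0.val + 1) = Sum.inr (Sum.inr h0) := by
        rw [kArr_mid (by omega) (by omega)]
        simp
      rcases Int.lt_or_le 0 (gf d (w + 1)) with hpos | hnonpos
      · -- clockwise path cycle z_{i,0}
        have hC : ∀ v, w + 1 ≤ v → v ≤ n + 1 → 1 ≤ Cf d v := by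
          intro v hva hvb
          have hg := gmono L d hbal (w + 1) v (by omega) hva hvb
          have hgv : gf d v = (Cf d v : ℤ) - Af d (v - 1) := rfl
          have hg2 : (1 : ℤ) ≤ gf d (w + 1) := hpos
          omega
        have hz : zexp n ℓ L (h0.val + 1) 0
            = (∑ v ∈ insert 0 (Finset.Icc (w + 1) n), Finsupp.single (cc n ℓ v) 1)
              + Finsupp.single (Sum.inr (Sum.inr h0)) 1 := by
          rw [zexp, if_neg (by omega : ¬ (h0.val + 1 = 0)),
            if_neg (by omega : ¬ (h0.val + 1 = ℓ + 2)), if_pos rfl, eC0, ← hwdef, hk0eq,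
            Finset.sum_insert (by simp)]
        refine ⟨h0.val + 1, 0, by omega, fun _ => by omega, by omega, ?_, ?_⟩
        · rw [hz]
          refine sum_single_add_single_le _ _ _ d ?_ (fun v _ => by simp [cc]) ?_ (by omega)
          · intro a ha b hb hab
            simp only [Finset.mem_insert, Finset.mem_Icc] at ha hb
            exact cc_inj (by omega) (by omega) hab
          · intro v hv
            simp only [Finset.mem_insert, Finset.mem_Icc] at hv
            rcases hv with h0v | hIcc
            · subst h0v
              show 1 ≤ Cf d 0
              rw [← Cwrap d]
              exact hC (n + 1) (by omega) (by omega)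
            · exact hC v (by omega) (by omega)
        · rw [hz]
          refine fs_ne_zero (q := Sum.inr (Sum.inr h0)) ?_
          rw [Finsupp.add_apply, Finsupp.single_eq_same]
          exact Nat.le_add_left 1 _
      · -- anticlockwise path cycle z_{i+1, s}
        have hA : ∀ v, v + 1 ≤ w → 1 ≤ Af d v := by
          intro v hv
          have hg := gmono L d hbal (v + 1) w (by omega) hv (by omega)
          have hgv : gf d (v + 1) = (Cf d (v + 1) : ℤ) - Af d (v + 1 - 1) := rfl
          rw [show v + 1 - 1 = v by omega] at hgv
          omega
        have hz : zexp n ℓ L (h0.val + 2) (L (h0.val + 2) - L (h0.val + 1) + 1)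
            = (∑ v ∈ Finset.range w, Finsupp.single (aa n ℓ v) 1)
              + Finsupp.single (Sum.inr (Sum.inr h0)) 1 := by
          rw [zexp, if_neg (by omega : ¬ (h0.val + 2 = 0)),
            if_neg (by omega : ¬ (h0.val + 2 = ℓ + 2)),
            if_neg (by omega : ¬ (L (h0.val + 2) - L (h0.val + 1) + 1 = 0)),
            if_pos (by norm_num), eA0]
          rw [show h0.val + 2 - 1 = h0.val + 1 by omega, ← hwdef, hk0eq]
        refine ⟨h0.val + 2, L (h0.val + 2) - L (h0.val + 1) + 1, by omega,
          fun _ => by rw [show h0.val + 2 - 1 = h0.val + 1 by omega], by omega, ?_, ?_⟩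
        · rw [hz]
          refine sum_single_add_single_le _ _ _ d ?_ (fun v _ => by simp [aa]) ?_ (by omega)
          · intro a ha b hb hab
            rw [Finset.mem_range] at ha hb
            exact aa_inj (by omega) (by omega) hab
          · intro v hv
            rw [Finset.mem_range] at hv
            exact hA v (by omega)
        · rw [hz]
          refine fs_ne_zero (q := Sum.inr (Sum.inr h0)) ?_
          rw [Finsupp.add_apply, Finsupp.single_eq_same]
          exact Nat.le_add_left 1 _

end Cycle
section Range
variable (n ℓ m : ℕ) (L : ℕ → ℕ) (s : ℕ → ℕ)

lemma phi_X {i j : ℕ} (hi : i < m + 2) (hj : j < nj m s i) :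
    phiMap n ℓ m L s (X (zidx m s i j)) = zmon n ℓ L i j := by
  rw [phiMap, aeval_X, zidx, dif_pos ⟨hi, hj⟩]

lemma hLle_of (hn1 : 1 ≤ n) (hL0 : L 0 = 1) (hLtop : L (ℓ + 1) = n)
    (hLrange : ∀ h, 1 ≤ h → h ≤ ℓ → 1 ≤ L h ∧ L h ≤ n) :
    ∀ i, i ≤ ℓ + 1 → L i ≤ n := by
  intro i hi
  rcases Nat.eq_zero_or_pos i with h0 | h1
  · subst h0; omega
  rcases Nat.lt_or_ge i (ℓ + 1) with hlt | hge
  · exact (hLrange i h1 (by omega)).2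
  · have : i = ℓ + 1 := by omega
    subst this; omega

lemma balanced_mem_range (hm : m = ℓ + 1)
    (hs : ∀ t, 1 ≤ t → t ≤ m → s t = L t - L (t - 1) + 1)
    (hn1 : 1 ≤ n) (hL0 : L 0 = 1) (hLtop : L (ℓ + 1) = n)
    (hLrange : ∀ h, 1 ≤ h → h ≤ ℓ → 1 ≤ L h ∧ L h ≤ n) :
    ∀ N (d : Arrow n ℓ →₀ ℕ), deg d ≤ N →
      (∀ v, flowIn n ℓ d v = flowOut n ℓ L d v) →
      monomial d 1 ∈ (phiMap n ℓ m L s).range := by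
  intro N
  induction N with
  | zero =>
      intro d hdeg hbal
      have h0 : d = 0 := (deg_eq_zero_iff d).mp (by omega)
      subst h0
      rw [monomial_zero', C_1]
      exact one_mem _
  | succ N ih =>
      intro d hdeg hbal
      by_cases hd0 : d = 0
      · subst hd0
        rw [monomial_zero', C_1]
        exact one_mem _
      obtain ⟨i, j, hi, hjb, hj0, hle, hzne⟩ :=
        exists_cycle L hn1 hL0 hLtop hLrange d hbal hd0
      have hiv : i < m + 2 := by omega
      have hjv : j < nj m s i := by
        rw [nj]
        by_cases hc : i = 0 ∨ i = m + 1
        · rw [if_pos hc]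
          have := hj0 (by omega : i = 0 ∨ i = ℓ + 2)
          omega
        · rw [if_neg hc]
          push_neg at hc
          have h1i : 1 ≤ i ∧ i ≤ ℓ + 1 := by omega
          have hjj := hjb h1i
          rw [hs i h1i.1 (by omega)]
          omega
      have hbc := zexp_balanced L hn1 hL0 hLtop
        (hLle_of n ℓ L hn1 hL0 hLtop hLrange) (by omega : i ≤ ℓ + 2) j
      have hsum : zexp n ℓ L i j + (d - zexp n ℓ L i j) = d := add_tsub_cancel_of_le hle
      have hbal' : ∀ v, flowIn n ℓ (d - zexp n ℓ L i j) v
          = flowOut n ℓ L (d - zexp n ℓ L i j) v := by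
        intro v
        have h1 : flowIn n ℓ (zexp n ℓ L i j) v + flowIn n ℓ (d - zexp n ℓ L i j) v
            = flowIn n ℓ d v := by rw [← flowIn_add, hsum]
        have h2 : flowOut n ℓ L (zexp n ℓ L i j) v + flowOut n ℓ L (d - zexp n ℓ L i j) v
            = flowOut n ℓ L d v := by rw [← flowOut_add, hsum]
        have h3 := hbal v
        have h4 := hbc v
        omega
      have hdegz : 1 ≤ deg (zexp n ℓ L i j) := by
        rcases Nat.eq_zero_or_pos (deg (zexp n ℓ L i j)) with h0 | h1
        · exact absurd ((deg_eq_zero_iff _).mp h0) hzne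
        · exact h1
      have hdeg' : deg (d - zexp n ℓ L i j) ≤ N := by
        have := deg_add (zexp n ℓ L i j) (d - zexp n ℓ L i j)
        rw [hsum] at this
        omega
      have h1 : monomial (zexp n ℓ L i j) 1 ∈ (phiMap n ℓ m L s).range := by
        rw [AlgHom.mem_range]
        exact ⟨X (zidx m s i j), by rw [phi_X n ℓ m L s hiv hjv, zmon_eq]⟩
      have h2 := ih (d - zexp n ℓ L i j) hdeg' hbal'
      have h3 : (monomial d 1 : MvPolynomial (Arrow n ℓ) ℂ)
          = monomial (zexp n ℓ L i j) 1 * monomial (d - zexp n ℓ L i j) 1 := by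
        rw [monomial_mul, one_mul, hsum]
      rw [h3]
      exact mul_mem h1 h2

lemma range_eq_invAlg (hm : m = ℓ + 1)
    (hs : ∀ t, 1 ≤ t → t ≤ m → s t = L t - L (t - 1) + 1)
    (hn1 : 1 ≤ n) (hL0 : L 0 = 1) (hLtop : L (ℓ + 1) = n)
    (hLrange : ∀ h, 1 ≤ h → h ≤ ℓ → 1 ≤ L h ∧ L h ≤ n) :
    (phiMap n ℓ m L s).range = invAlg n ℓ L := by
  apply le_antisymm
  · intro x hx
    obtain ⟨p, rfl⟩ := (AlgHom.mem_range _).mp hx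
    clear hx
    induction p using MvPolynomial.induction_on with
    | C a =>
        have hca : (C a : CZ m s) = algebraMap ℂ (CZ m s) a := rfl
        rw [hca, AlgHom.commutes]
        exact (invAlg n ℓ L).algebraMap_mem a
    | add p q hp hq =>
        rw [map_add]
        exact add_mem hp hq
    | mul_X p idx hp =>
        rw [map_mul]
        refine mul_mem hp ?_
        have hgen : phiMap n ℓ m L s (X idx) = zmon n ℓ L idx.1.val idx.2.val := by
          rw [phiMap, aeval_X]
        rw [hgen]
        exact zmon_mem_invAlg L hn1 hL0 hLtop
          (hLle_of n ℓ L hn1 hL0 hLtop hLrange)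
          (by have := idx.1.isLt; omega) idx.2.val
  · intro f hf
    rw [mem_invAlg_iff] at hf
    have hfs : f = ∑ d ∈ f.support, monomial d (coeff d f) :=
      (support_sum_monomial_coeff f).symm
    rw [hfs]
    refine sum_mem fun d hd => ?_
    have h1 : (monomial d (coeff d f) : MvPolynomial (Arrow n ℓ) ℂ)
        = C (coeff d f) * monomial d 1 := by
      rw [C_mul_monomial, mul_one]
    rw [h1]
    refine mul_mem ?_ (balanced_mem_range n ℓ m L s hm hs hn1 hL0 hLtop hLrange
      (deg d) d le_rfl (hf d hd))
    have hca : (C (coeff d f) : MvPolynomial (Arrow n ℓ) ℂ)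
        = algebraMap ℂ _ (coeff d f) := rfl
    rw [hca]
    exact Subalgebra.algebraMap_mem _ _

end Range
section QM
variable (n ℓ m : ℕ) (L : ℕ → ℕ) (s : ℕ → ℕ)

lemma zrow0 (hn1 : 1 ≤ n) (hL0 : L 0 = 1) (hm : m = ℓ + 1) {i : ℕ} (hi : i ≤ m) :
    zmon n ℓ L i 0 = xC0 n ℓ (L i) * X (kArr n ℓ i) := by
  rcases Nat.eq_zero_or_pos i with h0 | h1
  · subst h0
    rw [zmon, if_pos rfl, hL0, kArr_zero, xC0]
    have hr : Finset.range (n + 1) = insert 0 (Finset.Icc 1 n) := by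
      ext x; simp only [Finset.mem_range, Finset.mem_insert, Finset.mem_Icc]; omega
    have hi1 : Finset.Icc 1 n = insert 1 (Finset.Icc 2 n) := by
      ext x; simp only [Finset.mem_insert, Finset.mem_Icc]; omega
    rw [hr, Finset.prod_insert (by simp), hi1,
      Finset.prod_insert (by simp only [Finset.mem_Icc]; omega)]
    ring
  · rw [zmon, if_neg (by omega : ¬ (i = 0)), if_neg (by omega : ¬ (i = ℓ + 2)), if_pos rfl]

lemma ztop (hn1 : 1 ≤ n) (hLtop : L (ℓ + 1) = n) (hm : m = ℓ + 1)
    (hs : ∀ t, 1 ≤ t → t ≤ m → s t = L t - L (t - 1) + 1)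
    {i : ℕ} (h1 : 1 ≤ i) (hi : i ≤ m + 1) :
    zmon n ℓ L i (s i) = xA0 n ℓ (L (i - 1)) * X (kArr n ℓ (i - 1)) := by
  rcases Nat.lt_or_ge i (m + 1) with hlt | hge
  · have hsi := hs i h1 (by omega)
    rw [zmon, if_neg (by omega : ¬ (i = 0)), if_neg (by omega : ¬ (i = ℓ + 2)),
      if_neg (by omega : ¬ (s i = 0)), if_pos hsi]
  · have hieq : i = m + 1 := by omega
    subst hieq
    rw [zmon, if_neg (by omega : ¬ (m + 1 = 0)), if_pos (by omega : m + 1 = ℓ + 2),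
      show m + 1 - 1 = ℓ + 1 by omega, hLtop, kArr_top (by omega), xA0,
      Finset.prod_range_succ]

lemma phiW (hm : m = ℓ + 1) (hs : ∀ t, 1 ≤ t → t ≤ m → s t = L t - L (t - 1) + 1)
    {t : ℕ} (ht1 : 1 ≤ t) (ht2 : t ≤ m) :
    phiMap n ℓ m L s (Wq m s t)
      = (∏ v ∈ Finset.Ioc (L (t - 1)) (L t), X (cc n ℓ v))
        * (∏ v ∈ Finset.Ico (L (t - 1)) (L t), X (aa n ℓ v)) := by
  have hst := hs t ht1 ht2
  rw [Wq, map_prod]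
  have hterm : ∀ u ∈ Finset.Icc 1 (s t - 1),
      phiMap n ℓ m L s (Zv m s t u)
        = X (cc n ℓ (L t - u + 1)) * X (aa n ℓ (L t - u)) := by
    intro u hu
    rw [Finset.mem_Icc] at hu
    rw [Zv, phi_X n ℓ m L s (by omega) (by rw [nj, if_neg (by omega)]; omega), zmon,
      if_neg (by omega : ¬ (t = 0)), if_neg (by omega : ¬ (t = ℓ + 2)),
      if_neg (by omega : ¬ (u = 0)), if_neg (by omega : ¬ (u = L t - L (t - 1) + 1))]
  rw [Finset.prod_congr rfl hterm, Finset.prod_mul_distrib]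
  congr 1
  · refine Finset.prod_nbij' (fun u => L t - u + 1) (fun v => L t - v + 1) ?_ ?_ ?_ ?_ ?_
    · intro a ha
      simp only [Finset.mem_Icc] at ha
      simp only [Finset.mem_Ioc]
      omega
    · intro a ha
      simp only [Finset.mem_Ioc] at ha
      simp only [Finset.mem_Icc]
      omega
    · intro a ha
      simp only [Finset.mem_Icc] at ha
      omega
    · intro a ha
      simp only [Finset.mem_Ioc] at ha
      omega
    · intro a ha
      rfl
  · refine Finset.prod_nbij' (fun u => L t - u) (fun v => L t - v) ?_ ?_ ?_ ?_ ?_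
    · intro a ha
      simp only [Finset.mem_Icc] at ha
      simp only [Finset.mem_Ico]
      omega
    · intro a ha
      simp only [Finset.mem_Ico] at ha
      simp only [Finset.mem_Icc]
      omega
    · intro a ha
      simp only [Finset.mem_Icc] at ha
      omega
    · intro a ha
      simp only [Finset.mem_Ico] at ha
      omega
    · intro a ha
      rfl

lemma Wmerge (hm : m = ℓ + 1) (hs : ∀ t, 1 ≤ t → t ≤ m → s t = L t - L (t - 1) + 1)
    (hLmono : ∀ h₁ h₂, h₁ ≤ h₂ → h₂ ≤ ℓ + 1 → L h₁ ≤ L h₂) :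
    ∀ b a, 1 ≤ a → a ≤ b + 1 → b ≤ m →
    ∏ t ∈ Finset.Icc a b, phiMap n ℓ m L s (Wq m s t)
      = (∏ v ∈ Finset.Ioc (L (a - 1)) (L b), X (cc n ℓ v))
        * (∏ v ∈ Finset.Ico (L (a - 1)) (L b), X (aa n ℓ v)) := by
  intro b
  induction b with
  | zero =>
      intro a h1 h2 h3
      have : a = 1 := by omega
      subst this
      rw [Finset.Icc_eq_empty (by omega), Finset.prod_empty, Finset.Ioc_self,
        Finset.Ico_self, Finset.prod_empty, Finset.prod_empty, one_mul]
  | succ b ih =>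
      intro a h1 h2 h3
      rcases Nat.lt_or_ge (b + 1) a with hgt | hle2
      · have : a = b + 2 := by omega
        subst this
        rw [Finset.Icc_eq_empty (by omega), Finset.prod_empty,
          show b + 2 - 1 = b + 1 by omega, Finset.Ioc_self, Finset.Ico_self,
          Finset.prod_empty, Finset.prod_empty, one_mul]
      · rw [Finset.prod_Icc_succ_top (by omega : a ≤ b + 1), ih a h1 (by omega) (by omega),
          phiW n ℓ m L s hm hs (by omega) (by omega), show b + 1 - 1 = b by omega]
        have hm1 : L (a - 1) ≤ L b := hLmono (a - 1) b (by omega) (by omega)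
        have hm2 : L b ≤ L (b + 1) := hLmono b (b + 1) (by omega) (by omega)
        rw [mul_mul_mul_comm, Finset.prod_Ioc_consecutive _ hm1 hm2,
          Finset.prod_Ico_consecutive _ hm1 hm2]

lemma phi_qm_zero (hm : m = ℓ + 1) (hs : ∀ t, 1 ≤ t → t ≤ m → s t = L t - L (t - 1) + 1)
    (hsm1 : s (m + 1) = 0)
    (hn1 : 1 ≤ n) (hL0 : L 0 = 1) (hLtop : L (ℓ + 1) = n)
    (hLmono : ∀ h₁ h₂, h₁ ≤ h₂ → h₂ ≤ ℓ + 1 → L h₁ ≤ L h₂)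
    (hLrange : ∀ h, 1 ≤ h → h ≤ ℓ → 1 ≤ L h ∧ L h ≤ n)
    {i j : ℕ} (h1 : 1 ≤ i) (hij : i < j) (hj : j ≤ m + 1) :
    phiMap n ℓ m L s (qm m s i j) = 0 := by
  have hLle := hLle_of n ℓ L hn1 hL0 hLtop hLrange
  rw [qm, map_sub, map_mul, map_mul, map_mul, map_prod]
  have e1 : phiMap n ℓ m L s (Zv m s (i - 1) 0) = xC0 n ℓ (L (i - 1)) * X (kArr n ℓ (i - 1)) := by
    rw [Zv, phi_X n ℓ m L s (by omega) (by rw [nj]; split_ifs <;> omega)]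
    exact zrow0 n ℓ m L hn1 hL0 hm (by omega)
  have e2 : phiMap n ℓ m L s (Zv m s j (s j)) = xA0 n ℓ (L (j - 1)) * X (kArr n ℓ (j - 1)) := by
    have hv : s j < nj m s j := by
      rw [nj]
      split_ifs with hc
      · rcases hc with hc | hc
        · omega
        · rw [hc, hsm1]; omega
      · omega
    rw [Zv, phi_X n ℓ m L s (by omega) hv]
    exact ztop n ℓ m L s hn1 hLtop hm hs (by omega) hj
  have e3 : phiMap n ℓ m L s (Zv m s i (s i)) = xA0 n ℓ (L (i - 1)) * X (kArr n ℓ (i - 1)) := by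
    have hv : s i < nj m s i := by
      rw [nj]
      split_ifs with hc
      · rcases hc with hc | hc
        · omega
        · rw [hc, hsm1]; omega
      · omega
    rw [Zv, phi_X n ℓ m L s (by omega) hv]
    exact ztop n ℓ m L s hn1 hLtop hm hs h1 (by omega)
  have e4 : phiMap n ℓ m L s (Zv m s (j - 1) 0)
      = xC0 n ℓ (L (j - 1)) * X (kArr n ℓ (j - 1)) := by
    rw [Zv, phi_X n ℓ m L s (by omega) (by rw [nj]; split_ifs <;> omega)]
    exact zrow0 n ℓ m L hn1 hL0 hm (by omega)
  have e5 := Wmerge n ℓ m L s hm hs hLmono (j - 1) i h1 (by omega) (by omega)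
  rw [e1, e2, e3, e4, e5]
  have hmono : L (i - 1) ≤ L (j - 1) := hLmono (i - 1) (j - 1) (by omega) (by omega)
  have hjn : L (j - 1) ≤ n := hLle (j - 1) (by omega)
  have hsplitC : xC0 n ℓ (L (i - 1))
      = xC0 n ℓ (L (j - 1)) * ∏ v ∈ Finset.Ioc (L (i - 1)) (L (j - 1)), X (cc n ℓ v) := by
    rw [xC0, xC0, show Finset.Icc (L (i - 1) + 1) n = Finset.Ioc (L (i - 1)) n from Finset.Icc_add_one_left_eq_Ioc _ _, show Finset.Icc (L (j - 1) + 1) n = Finset.Ioc (L (j - 1)) n from Finset.Icc_add_one_left_eq_Ioc _ _,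
      ← Finset.prod_Ioc_consecutive _ hmono hjn]
    ring
  have hsplitA : xA0 n ℓ (L (j - 1))
      = xA0 n ℓ (L (i - 1)) * ∏ v ∈ Finset.Ico (L (i - 1)) (L (j - 1)), X (aa n ℓ v) := by
    rw [xA0, xA0, ← Finset.prod_range_mul_prod_Ico _ hmono]
  rw [hsplitC, hsplitA]
  ring

end QM


/-- the homomorphism `φ : ℂ[𝗓] → ℛ` maps onto the invariant ring `ℛ^G`,
and `QDet(𝗓)` is contained in the kernel of `φ`; in particular `φ(q_{i,j}) = 0` for every
quasiminor `q_{i,j}`.  Here `s_t = β_t − 1` (with the out-of-range convention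
`s_{m+1} = 0`, automatic from `List.getD`). -/
theorem phi_onto_invariants_and_QDet_in_kernel
    -- the group 1/r(1,a) with r > a ≥ 1 coprime
    (r a : ℕ) (ha : 1 ≤ a) (hra : a < r) (hcop : Nat.Coprime r a)
    -- Hirzebruch–Jung expansions r/a = [α_1,…,α_n], r/(r−a) = [β_1,…,β_m]
    (n m ℓ : ℕ) (αs βs : List ℕ) (hn1 : 1 ≤ n)
    (hαlen : αs.length = n) (hα2 : ∀ x ∈ αs, 2 ≤ x)
    (hαcf : hjcf (αs.map (fun x => (x : ℚ))) = (r : ℚ) / (a : ℚ))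
    (hβlen : βs.length = m) (hβ2 : ∀ x ∈ βs, 2 ≤ x)
    (hβcf : hjcf (βs.map (fun x => (x : ℚ))) = (r : ℚ) / ((r : ℚ) - (a : ℚ)))
    -- ℓ = Σ(α_i − 2), e = ℓ + 3 = m + 2
    (hl : ℓ = ∑ i ∈ Finset.range n, (αs.getD i 0 - 2))
    (hm : m = ℓ + 1)
    -- l_h = tail vertex of k_h: weakly increasing, l_0 = 1, l_{ℓ+1} = n, with
    -- α_i − 2 of the extra arrows having tail i; Riemenschneider duality
    (L : ℕ → ℕ) (hL0 : L 0 = 1) (hLtop : L (ℓ + 1) = n)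
    (hLmono : ∀ h₁ h₂, h₁ ≤ h₂ → h₂ ≤ ℓ + 1 → L h₁ ≤ L h₂)
    (hLrange : ∀ h, 1 ≤ h → h ≤ ℓ → 1 ≤ L h ∧ L h ≤ n)
    (hmult : ∀ i, 1 ≤ i → i ≤ n →
      ((Finset.Icc 1 ℓ).filter (fun h => L h = i)).card = αs.getD (i - 1) 0 - 2)
    (hdual : ∀ t, 1 ≤ t → t ≤ m → βs.getD (t - 1) 0 = L t - L (t - 1) + 2) :
    (AlgHom.range (phiMap n ℓ m L (fun t => βs.getD (t - 1) 0 - 1)) = invAlg n ℓ L) ∧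
    (QDet m (fun t => βs.getD (t - 1) 0 - 1) ≤
      RingHom.ker (phiMap n ℓ m L (fun t => βs.getD (t - 1) 0 - 1))) ∧
    (∀ i j : ℕ, 1 ≤ i → i < j → j ≤ m + 1 →
      phiMap n ℓ m L (fun t => βs.getD (t - 1) 0 - 1)
        (qm m (fun t => βs.getD (t - 1) 0 - 1) i j) = 0)     := by
  have hs : ∀ t, 1 ≤ t → t ≤ m →
      (fun t => βs.getD (t - 1) 0 - 1) t = L t - L (t - 1) + 1 := by
    intro t h1 h2
    have := hdual t h1 h2
    simp only
    omega
  have hsm1 : (fun t => βs.getD (t - 1) 0 - 1) (m + 1) = 0 := by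
    simp only
    rw [show m + 1 - 1 = m by omega, List.getD_eq_default _ _ (by rw [hβlen])]
  refine ⟨range_eq_invAlg n ℓ m L _ hm hs hn1 hL0 hLtop hLrange, ?_,
    fun i j h1 h2 h3 =>
      phi_qm_zero n ℓ m L _ hm hs hsm1 hn1 hL0 hLtop hLmono hLrange h1 h2 h3⟩
  rw [QDet, Ideal.span_le]
  rintro q ⟨i, j, h1, h2, h3, rfl⟩
  rw [SetLike.mem_coe, RingHom.mem_ker]
  exact phi_qm_zero n ℓ m L _ hm hs hsm1 hn1 hL0 hLtop hLmono hLrange h1 h2 h3
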